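/- For every natural number n and every complex number x, the n-th Euler polynomial, expressed as E_n(x) = (2^{n+1}/(n+1))·( B_{n+1}(x/2 + 1/2) − B_{n+1}(x/2) ), satisfies E_n(x) = xⁿ − x^{n+1} + (−i)^{n+1}·( A_n(i·x) + C_n(i·x) ). -/

import Mathlib

open Polynomial Finset

/-- The pair of polynomial sequences (Aₙ, Cₙ) from the paper:
A₀ = X, C₀ = 0, and
A_{n+1} = ((n+1)/(n+2))·(X·Aₙ + ∑_{k=0}^{n} λₙᵏ·A_k),
C_{n+1} = ((n+1)/(n+2))·((X²+1)·Xⁿ + ∑_{k=0}^{n} λₙᵏ·C_k),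
where λₙᵏ is the coefficient of Xᵏ in Cₙ. -/
noncomputable def AC : ℕ → Polynomial ℂ × Polynomial ℂ
  | 0 => (Polynomial.X, 0)
  | (n+1) =>
    (((n+1 : ℂ)/(n+2)) • (Polynomial.X * (AC n).1 +
        ∑ k ∈ (Finset.range (n+1)).attach, ((AC n).2.coeff k) • (AC k).1),
     ((n+1 : ℂ)/(n+2)) • ((Polynomial.X^2 + 1) * Polynomial.X^n +
        ∑ k ∈ (Finset.range (n+1)).attach, ((AC n).2.coeff k) • (AC k).2))
  decreasing_by
  all_goals first
    | exact Nat.lt_succ_self n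
    | exact Nat.lt_succ_of_lt (Finset.mem_range.mp k.2)
    | exact Finset.mem_range.mp k.2

noncomputable def polyA (n : ℕ) : Polynomial ℂ := (AC n).1
noncomputable def polyC (n : ℕ) : Polynomial ℂ := (AC n).2


noncomputable def Bc (m : ℕ) : Polynomial ℂ := (Polynomial.bernoulli m).map (algebraMap ℚ ℂ)
noncomputable def bc (m : ℕ) (z : ℂ) : ℂ := (Bc m).eval z
noncomputable def bh (m : ℕ) : ℂ := bc m (1/2)
noncomputable def cf (k : ℕ) : ℂ := Complex.I^(k+1) * 2^(k+1) / (k+1)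

noncomputable def Pc (k : ℕ) : Polynomial ℂ :=
  C (cf k) * ((Bc (k+1)).comp (C (1/2) - C (Complex.I/2) * X) - C (bh (k+1)))
noncomputable def Qc (k : ℕ) : Polynomial ℂ :=
  X^(k+1) - C Complex.I * X^k - C (cf k) * ((Bc (k+1)).comp (C (-(Complex.I/2)) * X) - C (bh (k+1)))

-- Bernoulli: polynomial-level shift identity over ℚ
lemma bern_comp_add_one (m : ℕ) :
    (Polynomial.bernoulli m).comp (X + 1) = Polynomial.bernoulli m + (m : ℚ[X]) * X^(m-1) := by
  apply Polynomial.funext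
  intro x
  simp [Polynomial.eval_comp, add_comm x 1, Polynomial.bernoulli_eval_one_add]

-- scalar version over ℂ
lemma bc_add_one (m : ℕ) (z : ℂ) : bc m (z + 1) = bc m z + m * z^(m-1) := by
  have h := congrArg (Polynomial.map (algebraMap ℚ ℂ)) (bern_comp_add_one m)
  rw [Polynomial.map_comp] at h
  have h2 := congrArg (Polynomial.eval z) h
  simpa [Bc, bc, Polynomial.eval_comp] using h2

lemma bern_eval_complex (m : ℕ) (z : ℂ) : (Polynomial.aeval z) (Polynomial.bernoulli m) = bc m z := by
  rw [bc, Bc, Polynomial.aeval_def, Polynomial.eval₂_eq_eval_map]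

lemma eval_Pc (k : ℕ) (z : ℂ) :
    (Pc k).eval z = cf k * (bc (k+1) ((1 - Complex.I*z)/2) - bh (k+1)) := by
  simp only [Pc, eval_mul, eval_sub, eval_comp, eval_C, eval_mul, eval_X, bc]
  ring_nf

lemma eval_Qc (k : ℕ) (z : ℂ) :
    (Qc k).eval z = z^(k+1) - Complex.I * z^k - cf k * (bc (k+1) (-(Complex.I/2)*z) - bh (k+1)) := by
  simp only [Qc, eval_sub, eval_mul, eval_pow, eval_comp, eval_C, eval_X, bc]

lemma cf_mul (k : ℕ) : cf k * (k+1) = Complex.I^(k+1) * 2^(k+1) := by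
  have : ((k:ℂ)+1) ≠ 0 := Nat.cast_add_one_ne_zero k
  rw [cf, div_mul_cancel₀ _ this]

lemma I_negI_pow (k : ℕ) : Complex.I^k * (-Complex.I)^k = 1 := by
  rw [← mul_pow]
  simp [one_pow]
lemma cf_term (k : ℕ) (w : ℂ) : cf k * ((k:ℂ)+1) * ((1 - Complex.I*w)/2)^k
    = 2 * Complex.I * (w + Complex.I)^k := by
  rw [cf_mul, div_pow]
  have h2 : (2:ℂ)^k ≠ 0 := pow_ne_zero _ two_ne_zero
  have h3 : Complex.I^k * (1 - Complex.I*w)^k = (w + Complex.I)^k := by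
    rw [← mul_pow]
    congr 1
    linear_combination (-w) * Complex.I_sq
  field_simp [pow_succ]
  linear_combination (2 * Complex.I * 2^k) * h3

lemma cf_term2 (k : ℕ) (w : ℂ) : cf k * ((k:ℂ)+1) * (-(Complex.I/2)*w)^k
    = 2 * Complex.I * w^k := by
  rw [cf_mul]
  have h : (-(Complex.I/2)*w)^k = (-Complex.I)^k * w^k / 2^k := by
    rw [show -(Complex.I/2)*w = (-Complex.I)*w/2 by ring, div_pow, mul_pow]
  have h2 := I_negI_pow k
  have h3 : (2:ℂ)^k ≠ 0 := pow_ne_zero _ two_ne_zero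
  rw [h]
  field_simp [pow_succ]
  have h4 : Complex.I^(k*2) * (-1:ℂ)^k = 1 := by
    rw [mul_comm k 2, pow_mul, Complex.I_sq, ← mul_pow]
    norm_num
  linear_combination (2 * Complex.I * w^k * 2^k) * h4

lemma s1 (k : ℕ) (z : ℂ) :
    (Pc k).eval (z + 2*Complex.I) = (Pc k).eval z + 2*Complex.I*(z+Complex.I)^k := by
  rw [eval_Pc, eval_Pc]
  have harg : (1 - Complex.I*(z+2*Complex.I))/2 = (1 - Complex.I*z)/2 + 1 := by
    linear_combination (-1 : ℂ) * Complex.I_sq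
  rw [harg, bc_add_one]
  have := cf_term k z
  push_cast
  push_cast at this
  linear_combination this

lemma s2 (k : ℕ) (z : ℂ) :
    (Qc k).eval (z + 2*Complex.I) = (Qc k).eval z
      + (z+2*Complex.I)^(k+1) - Complex.I*(z+2*Complex.I)^k - z^(k+1) - Complex.I*z^k := by
  rw [eval_Qc, eval_Qc]
  have harg : -(Complex.I/2)*(z+2*Complex.I) = -(Complex.I/2)*z + 1 := by
    linear_combination (-1 : ℂ) * Complex.I_sq
  rw [harg, bc_add_one]
  have h := cf_term2 k z
  push_cast at h ⊢
  linear_combination (-1 : ℂ) * h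

lemma s3 (n : ℕ) (z : ℂ) :
    (Qc n).eval (z + Complex.I) = (z+Complex.I)^(n+1) - Complex.I*(z+Complex.I)^n - (Pc n).eval z := by
  rw [eval_Qc, eval_Pc]
  have harg : -(Complex.I/2)*(z+Complex.I) = (1 - Complex.I*z)/2 := by
    linear_combination (-(1:ℂ)/2) * Complex.I_sq
  rw [harg]

lemma s5a (k : ℕ) : (Pc k).eval 0 = 0 := by
  rw [eval_Pc]
  norm_num [bh]

lemma s5b (k : ℕ) : (Qc k).eval Complex.I = 0 := by
  rw [eval_Qc]
  have harg : -(Complex.I/2)*Complex.I = 1/2 := by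
    linear_combination (-(1:ℂ)/2) * Complex.I_sq
  rw [harg]
  simp [bh, pow_succ]
  ring
lemma bern_coeff_self (m : ℕ) : (Polynomial.bernoulli m).coeff m = 1 := by
  rw [Polynomial.bernoulli, Polynomial.finset_sum_coeff]
  rw [Finset.sum_eq_single 0]
  · simp
  · intro i hi hne
    rw [Polynomial.coeff_monomial, if_neg]
    have := Finset.mem_range.mp hi
    omega
  · intro h
    exact absurd (Finset.mem_range.mpr (Nat.succ_pos m)) h

lemma bern_natDegree_le (m : ℕ) : (Polynomial.bernoulli m).natDegree ≤ m := by
  rw [Polynomial.bernoulli]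
  apply Polynomial.natDegree_sum_le_of_forall_le
  intro i _
  exact (Polynomial.natDegree_monomial_le _).trans (Nat.sub_le m i)

lemma Bc_coeff_self (m : ℕ) : (Bc m).coeff m = 1 := by
  rw [Bc, Polynomial.coeff_map, bern_coeff_self, map_one]

lemma Bc_natDegree_le (m : ℕ) : (Bc m).natDegree ≤ m :=
  le_trans Polynomial.natDegree_map_le (bern_natDegree_le m)

lemma comp_CmulX_coeff (p : Polynomial ℂ) (a : ℂ) (N : ℕ) :
    (p.comp (C a * X)).coeff N = p.coeff N * a^N := by
  rw [Polynomial.comp_eq_sum_left, Polynomial.sum_def, Polynomial.finset_sum_coeff]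
  simp only [mul_pow, ← Polynomial.C_pow, Polynomial.coeff_C_mul, Polynomial.coeff_X_pow,
    mul_ite, mul_one, mul_zero]
  rw [Finset.sum_ite_eq p.support N (fun e => p.coeff e * a^e)]
  by_cases h : N ∈ p.support
  · simp [h]
  · simp [h, Polynomial.notMem_support_iff.mp h]

lemma Qc_coeff_top (n : ℕ) : (Qc n).coeff (n+1) = (n : ℂ)/(n+1) := by
  have hb : ((Bc (n+1)).comp (C (-(Complex.I/2)) * X)).coeff (n+1)
      = (-(Complex.I/2))^(n+1) := by
    rw [comp_CmulX_coeff, Bc_coeff_self, one_mul]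
  have h1 : cf n * (-(Complex.I/2))^(n+1) = 1/((n:ℂ)+1) := by
    have h2 : ((n:ℂ)+1) ≠ 0 := Nat.cast_add_one_ne_zero n
    have h3 : (-(Complex.I/2))^(n+1) = (-Complex.I)^(n+1)/2^(n+1) := by
      rw [show -(Complex.I/2) = (-Complex.I)/2 by ring, div_pow]
    rw [cf, h3]
    have hA : Complex.I^(n*2) * (-1:ℂ)^n = 1 := by
      rw [mul_comm n 2, pow_mul, Complex.I_sq, ← mul_pow]
      norm_num
    field_simp
    linear_combination (-(Complex.I^2)) * hA + (-1 : ℂ) * Complex.I_sq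
  simp only [Qc, Polynomial.coeff_sub, Polynomial.coeff_C_mul, Polynomial.coeff_X_pow, hb,
    Polynomial.coeff_C]
  norm_num
  rw [h1]
  have h2 : ((n:ℂ)+1) ≠ 0 := Nat.cast_add_one_ne_zero n
  field_simp
  ring

lemma Qc_natDegree_le (n : ℕ) : (Qc n).natDegree ≤ n+1 := by
  apply le_trans (Polynomial.natDegree_sub_le _ _)
  simp only [max_le_iff]
  constructor
  · apply le_trans (Polynomial.natDegree_sub_le _ _)
    simp only [max_le_iff]
    refine ⟨by simp, ?_⟩
    apply le_trans (Polynomial.natDegree_C_mul_le _ _)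
    exact (Polynomial.natDegree_X_pow n).le.trans (Nat.le_succ n)
  · apply le_trans (Polynomial.natDegree_C_mul_le _ _)
    apply le_trans (Polynomial.natDegree_sub_le _ _)
    simp only [max_le_iff]
    refine ⟨?_, by simp⟩
    apply le_trans Polynomial.natDegree_comp_le
    calc (Bc (n+1)).natDegree * (C (-(Complex.I/2)) * X).natDegree
        ≤ (n+1) * 1 := Nat.mul_le_mul (Bc_natDegree_le _) (Polynomial.natDegree_C_mul_le _ _ |>.trans (by simp))
      _ = n+1 := by ring

lemma s4 (n : ℕ) (y : ℂ) :
    ∑ k ∈ range (n+1), (Qc n).coeff k * y^k = (Qc n).eval y - ((n:ℂ)/(n+1))*y^(n+1) := by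
  have hd : (Qc n).natDegree < n+2 := Nat.lt_succ_of_le (Qc_natDegree_le n)
  rw [Polynomial.eval_eq_sum_range' hd y]
  conv_rhs => rw [Finset.sum_range_succ]
  rw [Qc_coeff_top]
  ring
lemma key_ext (a : ℂ) (p q : Polynomial ℂ)
    (h : ∀ z : ℂ, p.eval (z + 2*Complex.I) - p.eval z = q.eval (z + 2*Complex.I) - q.eval z)
    (ha : p.eval a = q.eval a) : p = q := by
  have hr : ∀ m : ℕ, (p - q).eval (a + m*(2*Complex.I)) = 0 := by
    intro m
    induction m with
    | zero => simpa [sub_eq_zero] using ha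
    | succ m ih =>
      have h2 := h (a + m*(2*Complex.I))
      have : (p-q).eval (a + m*(2*Complex.I) + 2*Complex.I) = (p-q).eval (a + m*(2*Complex.I)) := by
        simp only [Polynomial.eval_sub]
        linear_combination h2
      rw [show (a + ((m:ℕ)+1 : ℕ)*(2*Complex.I) : ℂ) = a + (m:ℂ)*(2*Complex.I) + 2*Complex.I by push_cast; ring]
      rw [this]
      exact ih
  have hinf : {z : ℂ | (p - q).IsRoot z}.Infinite := by
    apply Set.infinite_of_injective_forall_mem (f := fun m : ℕ => a + m*(2*Complex.I))
    · intro m1 m2 hm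
      have h2I : (2*Complex.I) ≠ 0 := by simp [Complex.I_ne_zero]
      have h3 := mul_right_cancel₀ h2I (add_left_cancel hm)
      exact_mod_cast h3
    · intro m
      exact hr m
  have h0 : p - q = 0 := Polynomial.eq_zero_of_infinite_isRoot _ hinf
  exact sub_eq_zero.mp h0

lemma hne (n : ℕ) : ((n:ℂ)+1) ≠ 0 := Nat.cast_add_one_ne_zero n

lemma hne2 (n : ℕ) : ((n:ℂ)+2) ≠ 0 := by
  have h := Nat.cast_add_one_ne_zero (R := ℂ) (n+1)
  push_cast at h
  intro hc; apply h; linear_combination hc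

lemma IdA' (n : ℕ) :
    (((n:ℂ)+1)) • (X * Pc n + ∑ k ∈ range (n+1), (Qc n).coeff k • Pc k)
      = (((n:ℂ)+2)) • Pc (n+1) := by
  apply key_ext 0
  · intro z
    simp only [Polynomial.eval_smul, smul_eq_mul, Polynomial.eval_add, Polynomial.eval_mul,
      Polynomial.eval_X, Polynomial.eval_finset_sum]
    rw [s1 n z, s1 (n+1) z]
    have h1 : ∑ k ∈ range (n+1), (Qc n).coeff k * (Pc k).eval (z+2*Complex.I)
        = ∑ k ∈ range (n+1), ((Qc n).coeff k * (Pc k).eval z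
            + 2*Complex.I*((Qc n).coeff k * (z+Complex.I)^k)) := by
      apply Finset.sum_congr rfl
      intro k _
      rw [s1]; ring
    rw [h1, Finset.sum_add_distrib, ← Finset.mul_sum, s4 n (z+Complex.I), s3 n z]
    have hn := hne n
    field_simp
    ring
  · simp only [Polynomial.eval_smul, smul_eq_mul, Polynomial.eval_add, Polynomial.eval_mul,
      Polynomial.eval_X, Polynomial.eval_finset_sum, s5a, zero_mul, mul_zero, zero_add]
    simp [s5a]

lemma IdC' (n : ℕ) :
    (((n:ℂ)+1)) • ((X^2+1) * X^n + ∑ k ∈ range (n+1), (Qc n).coeff k • Qc k)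
      = (((n:ℂ)+2)) • Qc (n+1) := by
  apply key_ext Complex.I
  · intro z
    simp only [Polynomial.eval_smul, smul_eq_mul, Polynomial.eval_add, Polynomial.eval_mul,
      Polynomial.eval_pow, Polynomial.eval_X, Polynomial.eval_one, Polynomial.eval_finset_sum]
    have h1 : ∑ k ∈ range (n+1), (Qc n).coeff k * (Qc k).eval (z+2*Complex.I)
        = ∑ k ∈ range (n+1), ((Qc n).coeff k * (Qc k).eval z
            + ((Qc n).coeff k * ((z+2*Complex.I)^(k+1) - Complex.I*(z+2*Complex.I)^k
                - z^(k+1) - Complex.I*z^k))) := by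
      apply Finset.sum_congr rfl
      intro k _
      rw [s2]; ring
    have h2 : ∑ k ∈ range (n+1), ((Qc n).coeff k * ((z+2*Complex.I)^(k+1)
          - Complex.I*(z+2*Complex.I)^k - z^(k+1) - Complex.I*z^k))
        = (z+Complex.I) * ((∑ k ∈ range (n+1), (Qc n).coeff k * (z+2*Complex.I)^k)
            - (∑ k ∈ range (n+1), (Qc n).coeff k * z^k)) := by
      rw [mul_sub, Finset.mul_sum, Finset.mul_sum, ← Finset.sum_sub_distrib]
      apply Finset.sum_congr rfl
      intro k _
      ring
    rw [h1, Finset.sum_add_distrib, h2, s4 n (z+2*Complex.I), s4 n z, s2 n z, s2 (n+1) z]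
    have hn := hne n
    field_simp
    ring_nf
    linear_combination (((n:ℂ)+1)*((z+2*Complex.I)^n - z^n)) * Complex.I_sq
  · simp only [Polynomial.eval_smul, smul_eq_mul, Polynomial.eval_add, Polynomial.eval_mul,
      Polynomial.eval_pow, Polynomial.eval_X, Polynomial.eval_one, Polynomial.eval_finset_sum,
      s5b, mul_zero]
    simp [s5b, Complex.I_sq]
section TailTest
lemma bc_one (z : ℂ) : bc 1 z = z - 1/2 := by
  simp [bc, Bc, Polynomial.bernoulli, Finset.sum_range_succ]
  norm_num
  ring

lemma Pc_zero : Pc 0 = X := by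
  apply Polynomial.funext
  intro z
  rw [eval_Pc, Polynomial.eval_X, bc_one, bh, bc_one, cf]
  norm_num
  linear_combination (-z) * Complex.I_sq

lemma Qc_zero : Qc 0 = 0 := by
  apply Polynomial.funext
  intro z
  rw [eval_Qc, bc_one, bh, bc_one, cf, Polynomial.eval_zero]
  norm_num
  linear_combination z * Complex.I_sq
end TailTest


lemma AC_closed (n : ℕ) : AC n = (Pc n, Qc n) := by
  induction n using Nat.strong_induction_on with
  | _ n ih =>
    cases n with
    | zero =>
      rw [AC, Pc_zero, Qc_zero]
    | succ m =>
      rw [AC]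
      have hsum1 : ∑ k ∈ (Finset.range (m+1)).attach, (((AC m).2).coeff k) • (AC k).1
          = ∑ k ∈ range (m+1), (Qc m).coeff k • Pc k := by
        rw [← Finset.sum_attach (range (m+1)) (fun k => (Qc m).coeff k • Pc k)]
        apply Finset.sum_congr rfl
        intro k _
        rw [ih m (Nat.lt_succ_self m), ih k (Finset.mem_range.mp k.2)]
      have hsum2 : ∑ k ∈ (Finset.range (m+1)).attach, (((AC m).2).coeff k) • (AC k).2
          = ∑ k ∈ range (m+1), (Qc m).coeff k • Qc k := by
        rw [← Finset.sum_attach (range (m+1)) (fun k => (Qc m).coeff k • Qc k)]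
        apply Finset.sum_congr rfl
        intro k _
        rw [ih m (Nat.lt_succ_self m), ih k (Finset.mem_range.mp k.2)]
      rw [hsum1, hsum2, ih m (Nat.lt_succ_self m)]
      have key : ∀ (W T : Polynomial ℂ), ((m:ℂ)+1) • W = ((m:ℂ)+2) • T →
          ((m+1 : ℂ)/(m+2)) • W = T := by
        intro W T h
        have h2 : W = (((m:ℂ)+1))⁻¹ • (((m:ℂ)+2) • T) := by
          rw [← h, inv_smul_smul₀ (hne m)]
        rw [h2, smul_smul, smul_smul]
        have hs : ((m:ℂ) + 1) / ((m:ℂ) + 2) * ((m:ℂ) + 1)⁻¹ * ((m:ℂ) + 2) = 1 := by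
          have h1 := hne m
          have h2 := hne2 m
          field_simp
        rw [hs, one_smul]
      have e1 := key _ _ (IdA' m)
      have e2 := key _ _ (IdC' m)
      rw [Prod.ext_iff]
      constructor
      · simpa using e1
      · simpa using e2


theorem stmt7 (n : ℕ) (x : ℂ) :
    ((2 : ℂ) ^ (n + 1) / (n + 1)) *
        (Polynomial.aeval (x / 2 + 1 / 2) (Polynomial.bernoulli (n + 1)) -
          Polynomial.aeval (x / 2) (Polynomial.bernoulli (n + 1))) =
      x ^ n - x ^ (n + 1) +
        (-Complex.I) ^ (n + 1) *
          ((polyA n).eval (Complex.I * x) + (polyC n).eval (Complex.I * x)) := by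
  have h := AC_closed n
  unfold polyA polyC
  rw [h]
  rw [eval_Pc, eval_Qc]
  rw [bern_eval_complex, bern_eval_complex]
  have harg1 : (1 - Complex.I*(Complex.I*x))/2 = x/2 + 1/2 := by
    linear_combination (-x/2) * Complex.I_sq
  have harg2 : -(Complex.I/2)*(Complex.I*x) = x/2 := by
    linear_combination (-x/2) * Complex.I_sq
  rw [harg1, harg2]
  have e1 : (-Complex.I)^(n+1) * cf n = 2^(n+1)/((n:ℂ)+1) := by
    rw [cf]
    have h4 := I_negI_pow (n+1)
    have hA : Complex.I^(n*2) * (-1:ℂ)^n = 1 := by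
      rw [mul_comm n 2, pow_mul, Complex.I_sq, ← mul_pow]
      norm_num
    have hn := hne n
    field_simp
    linear_combination (-(Complex.I^2)) * hA + (-1 : ℂ) * Complex.I_sq
  have e2 : (-Complex.I)^(n+1) * (Complex.I*x)^(n+1) = x^(n+1) := by
    rw [mul_pow]
    have h4 := I_negI_pow (n+1)
    linear_combination x^(n+1) * h4
  have e3 : (-Complex.I)^(n+1) * (Complex.I * (Complex.I*x)^n) = x^n := by
    rw [mul_pow]
    have h4 := I_negI_pow (n+1)
    have hI : Complex.I * (Complex.I^n * x^n) = Complex.I^(n+1) * x^n := by rw [pow_succ]; ring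
    rw [hI]
    linear_combination x^n * h4
  linear_combination (bc (n+1) (x/2) - bc (n+1) (x/2+1/2)) * e1 - e2 + e3
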